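/- For the mean-variance Riccati system with terminal data Λ_n = γ/2, Γ_n = 0, ρ_n = −1, χ_n = 0 and backward recursions Λ_k = Λ_{k+1}·σ²/(σ²+b²Δ), Γ_k = σ²Λ_{k+1}Γ_{k+1}/(σ²Λ_{k+1}+b²ΔΓ_{k+1}), ρ_k = σ²Λ_{k+1}ρ_{k+1}/(b²ΔΓ_{k+1}+σ²Λ_{k+1}), χ_k = χ_{k+1} − (1/4)·b²Δρ_{k+1}²/(σ²Λ_{k+1}+b²ΔΓ_{k+1}), the explicit solution for k = 0,…,n is Λ_k = (γ/2)(σ²/(σ²+b²Δ))^{n−k}, Γ_k = 0, ρ_k = −1, and χ_k = −(1/(2γ))·(((σ²+b²Δ)/σ²)^{n−k} − 1). -/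

import Mathlib

/-- Explicit solution of the mean-variance Riccati system. -/
theorem mean_variance_riccati_explicit
    (n : ℕ) (γ b σ Δ : ℝ) (hγ : 0 < γ) (hb : 0 < b) (hσ : 0 < σ) (hΔ : 0 < Δ)
    (Λ Γ ρ χ : ℕ → ℝ)
    (hΛn : Λ n = γ / 2) (hΓn : Γ n = 0) (hρn : ρ n = -1) (hχn : χ n = 0)
    (hΛ : ∀ k < n, Λ k = Λ (k + 1) * (σ ^ 2 / (σ ^ 2 + b ^ 2 * Δ)))
    (hΓ : ∀ k < n, Γ k = σ ^ 2 * Λ (k + 1) * Γ (k + 1) / (σ ^ 2 * Λ (k + 1) + b ^ 2 * Δ * Γ (k + 1)))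
    (hρ : ∀ k < n, ρ k = σ ^ 2 * Λ (k + 1) * ρ (k + 1) / (b ^ 2 * Δ * Γ (k + 1) + σ ^ 2 * Λ (k + 1)))
    (hχ : ∀ k < n, χ k = χ (k + 1)
          - (1 / 4) * (b ^ 2 * Δ * ρ (k + 1) ^ 2 / (σ ^ 2 * Λ (k + 1) + b ^ 2 * Δ * Γ (k + 1)))) :
    ∀ k ≤ n,
      Λ k = (γ / 2) * (σ ^ 2 / (σ ^ 2 + b ^ 2 * Δ)) ^ (n - k)
      ∧ Γ k = 0
      ∧ ρ k = -1
      ∧ χ k = -(1 / (2 * γ)) * (((σ ^ 2 + b ^ 2 * Δ) / σ ^ 2) ^ (n - k) - 1) := by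
  have hσ2 : (0:ℝ) < σ ^ 2 := by positivity
  have hden : (0:ℝ) < σ ^ 2 + b ^ 2 * Δ := by positivity
  have key : ∀ d : ℕ, ∀ k : ℕ, k + d = n →
      Λ k = (γ / 2) * (σ ^ 2 / (σ ^ 2 + b ^ 2 * Δ)) ^ (n - k)
      ∧ Γ k = 0
      ∧ ρ k = -1
      ∧ χ k = -(1 / (2 * γ)) * (((σ ^ 2 + b ^ 2 * Δ) / σ ^ 2) ^ (n - k) - 1) := by
    intro d
    induction d with
    | zero =>
      intro k hk
      simp only [Nat.add_zero] at hk
      subst hk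
      simp [hΛn, hΓn, hρn, hχn]
    | succ d ih =>
      intro k hk
      have hk1 : (k + 1) + d = n := by omega
      have hkn : k < n := by omega
      obtain ⟨hL, hG, hR, hX⟩ := ih (k + 1) hk1
      have hd : n - (k + 1) = d := by omega
      have hd1 : n - k = d + 1 := by omega
      rw [hd] at hL hX
      have hΛpos : 0 < Λ (k + 1) := by
        rw [hL]; positivity
      refine ⟨?_, ?_, ?_, ?_⟩
      · rw [hΛ k hkn, hL, hd1]; ring
      · rw [hΓ k hkn, hG]; simp
      · rw [hρ k hkn, hG, hR]
        field_simp
        ring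
      · rw [hχ k hkn, hG, hR, hX, hL, hd1]
        have h2 : (σ ^ 2 * ((γ / 2) * (σ ^ 2 / (σ ^ 2 + b ^ 2 * Δ)) ^ d)) ≠ 0 := by
          positivity
        have hσ0 : σ ≠ 0 := hσ.ne'
        simp only [div_pow]
        field_simp
        ring
  intro k hk
  exact key (n - k) k (by omega)
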